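/- Let Omega be a set and let B_1,...,B_n : Omega -> R be linearly independent functions spanning a subspace S of the real-valued functions on Omega. For each i = 1,...,n let Omega_i be a subset of Omega and let K_i = { j : the restriction of B_j to Omega_i is not identically zero }. Suppose for each i: (a) i is in K_i; (b) the restrictions (B_j|_{Omega_i})_{j in K_i} are linearly independent; (c) there are maps c^{(i)}_j : (functions Omega -> R) -> R for j in K_i such that for every f in S one has sum_{j in K_i} c^{(i)}_j(f) * B_j(x) = f(x) for all x in Omega_i. Define Q(f) = sum_{i=1}^n c^{(i)}_i(f) * B_i. Then Q(f) = f for every f in S. -/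

import Mathlib

/-- General recipe for quasi-interpolation projectors: if each local projector
reproduces the restriction of the space `S` to the sub-domain `Ω i`, then the
global quasi-interpolant `Q f = ∑ i, c i i f • B i` reproduces all of `S`. -/
theorem quasi_interpolation_projector
    {Ω : Type*} {n : ℕ} (B : Fin n → Ω → ℝ)
    (hB : LinearIndependent ℝ B)
    (S : Submodule ℝ (Ω → ℝ)) (hS : S = Submodule.span ℝ (Set.range B))
    (Om : Fin n → Set Ω)
    (K : Fin n → Finset (Fin n))
    (hK : ∀ i j, j ∈ K i ↔ ¬ (∀ x ∈ Om i, B j x = 0))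
    (hiK : ∀ i, i ∈ K i)
    (hindep : ∀ i, LinearIndependent ℝ
      (fun j : {j // j ∈ K i} => (Om i).restrict (B j.1)))
    (c : Fin n → Fin n → (Ω → ℝ) → ℝ)
    (hc : ∀ i, ∀ f ∈ S, ∀ x ∈ Om i, ∑ j ∈ K i, c i j f * B j x = f x) :
    ∀ f ∈ S, (fun x => ∑ i, c i i f * B i x) = f := by
  intro f hf
  have hf' := hf
  rw [hS, Submodule.mem_span_range_iff_exists_fun ℝ] at hf'
  obtain ⟨a, ha⟩ := hf'
  have hax : ∀ x, ∑ j, a j * B j x = f x := by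
    intro x
    have := congrFun ha x
    simpa [Finset.sum_apply] using this
  have key : ∀ i, c i i f = a i := by
    intro i
    have hli := Fintype.linearIndependent_iff.mp (hindep i)
    have h0 : ∑ j : {j // j ∈ K i},
        (c i j.1 f - a j.1) • (Om i).restrict (B j.1) = 0 := by
      funext x
      have hx := x.2
      have h1 : ∑ j ∈ K i, c i j f * B j x.1 = f x.1 := hc i f hf x.1 hx
      have h2 : ∑ j ∈ K i, a j * B j x.1 = f x.1 := by
        rw [← hax x.1]
        apply Finset.sum_subset (Finset.subset_univ _)
        intro j _ hj
        have : ∀ y ∈ Om i, B j y = 0 := not_not.mp ((hK i j).not.mp hj)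
        simp [this x.1 hx]
      have h3 : ∑ j ∈ K i, (c i j f - a j) * B j x.1 = 0 := by
        simp only [sub_mul, Finset.sum_sub_distrib, h1, h2, sub_self]
      calc (∑ j : {j // j ∈ K i},
            (c i j.1 f - a j.1) • (Om i).restrict (B j.1)) x
          = ∑ j : {j // j ∈ K i}, (c i j.1 f - a j.1) * B j.1 x.1 := by
            simp [Finset.sum_apply]
            rfl
        _ = ∑ j ∈ K i, (c i j f - a j) * B j x.1 := by
            rw [← Finset.sum_attach (K i) fun j => (c i j f - a j) * B j x.1]
            rfl
        _ = 0 := h3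
    have := hli (fun j => c i j.1 f - a j.1) h0 ⟨i, hiK i⟩
    linarith
  funext x
  rw [← hax x]
  exact Finset.sum_congr rfl fun i _ => by rw [key i]
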